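/- Let ρ, σ be density matrices on ℂ^d with Nussbaum–Szkoła distributions p, q. Then for every α ∈ (0,1), Tr[ρ^α σ^{1-α}] = Σ_{i,j} p(i,j)^α q(i,j)^{1-α}, i.e. the Petz Rényi divergence of (ρ,σ) equals the classical Rényi divergence of (p,q). -/

import Mathlib

open Matrix
open scoped BigOperators ComplexOrder

noncomputable section

variable {n : Type*} [Fintype n] [DecidableEq n]

/-- Apply a real function spectrally to a Hermitian matrix (junk value `0` otherwise). -/
def specFun (f : ℝ → ℝ) (A : Matrix n n ℂ) : Matrix n n ℂ :=
  if hA : A.IsHermitian then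
    (hA.eigenvectorUnitary : Matrix n n ℂ) *
      Matrix.diagonal (fun i => ((f (hA.eigenvalues i) : ℝ) : ℂ)) *
      star (hA.eigenvectorUnitary : Matrix n n ℂ)
  else 0

/-- Spectral real power of a matrix (`0 ^ α = 0` for `α ∈ (0,1)` via `Real.rpow`). -/
def mPow (A : Matrix n n ℂ) (α : ℝ) : Matrix n n ℂ := specFun (fun x => x ^ α) A

/-- The Nussbaum–Szkoła distribution built from spectral data `(λ, x, y)`:
`p(i,j) = λ_i |⟨x_i|y_j⟩|²`. -/
def nsDist {d : ℕ} (lam : Fin d → ℝ) (x y : Fin d → (Fin d → ℂ)) (i j : Fin d) : ℝ :=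
  lam i * Complex.normSq (star (x i) ⬝ᵥ y j)

section auxLemmas

variable {d : ℕ}

lemma my_sum_mulVec {ι : Type*} (s : Finset ι) (M : ι → Matrix (Fin d) (Fin d) ℂ)
    (v : Fin d → ℂ) : (∑ i ∈ s, M i) *ᵥ v = ∑ i ∈ s, M i *ᵥ v := by
  ext k
  simp [Matrix.mulVec, dotProduct, Matrix.sum_apply, Finset.sum_apply, Finset.sum_mul]
  rw [Finset.sum_comm]

lemma my_vecMulVec_mulVec (w u v : Fin d → ℂ) :
    Matrix.vecMulVec w u *ᵥ v = (u ⬝ᵥ v) • w := by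
  ext k
  simp only [Matrix.mulVec, dotProduct, Matrix.vecMulVec_apply, Pi.smul_apply,
    smul_eq_mul, Finset.sum_mul]
  apply Finset.sum_congr rfl
  intros; ring

lemma decomp_mulVec (c : Fin d → ℝ) (x : Fin d → Fin d → ℂ)
    (hx : ∀ i k, star (x i) ⬝ᵥ x k = if i = k then 1 else 0) (j : Fin d) :
    (∑ i, (c i : ℂ) • Matrix.vecMulVec (x i) (star (x i))) *ᵥ x j = (c j : ℂ) • x j := by
  rw [my_sum_mulVec]
  have : ∀ i, ((c i : ℂ) • Matrix.vecMulVec (x i) (star (x i))) *ᵥ x j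
      = ((if i = j then 1 else 0 : ℂ) * c i) • x i := by
    intro i
    rw [Matrix.smul_mulVec, my_vecMulVec_mulVec, hx i j, smul_smul, mul_comm]
  simp only [this]
  rw [Finset.sum_eq_single j]
  · simp
  · intro b _ hb; simp [hb]
  · simp

lemma specFun_mulVec {A : Matrix (Fin d) (Fin d) ℂ} (hA : A.IsHermitian)
    (f : ℝ → ℝ) (c : ℝ) (v : Fin d → ℂ) (hv : A *ᵥ v = (c : ℂ) • v) :
    specFun f A *ᵥ v = ((f c : ℝ) : ℂ) • v := by
  set U : Matrix (Fin d) (Fin d) ℂ := (hA.eigenvectorUnitary : Matrix (Fin d) (Fin d) ℂ) with hU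
  have hUU : U * star U = 1 := (Matrix.mem_unitaryGroup_iff).mp hA.eigenvectorUnitary.2
  have hUU' : star U * U = 1 := (Matrix.mem_unitaryGroup_iff').mp hA.eigenvectorUnitary.2
  have hDA : U * Matrix.diagonal (fun i => ((hA.eigenvalues i : ℝ) : ℂ)) * star U = A := by
    conv_rhs => rw [hA.spectral_theorem]
    rfl
  have hvw : U *ᵥ (star U *ᵥ v) = v := by
    rw [Matrix.mulVec_mulVec, hUU, Matrix.one_mulVec]
  have hdw : Matrix.diagonal (fun i => ((hA.eigenvalues i : ℝ) : ℂ)) *ᵥ (star U *ᵥ v)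
      = (c : ℂ) • (star U *ᵥ v) := by
    have h1 : U *ᵥ (Matrix.diagonal (fun i => ((hA.eigenvalues i : ℝ) : ℂ)) *ᵥ (star U *ᵥ v))
        = (c : ℂ) • v := by
      rw [Matrix.mulVec_mulVec, Matrix.mulVec_mulVec, hDA]
      exact hv
    have h2 : (star U * U) *ᵥ
        (Matrix.diagonal (fun i => ((hA.eigenvalues i : ℝ) : ℂ)) *ᵥ (star U *ᵥ v))
        = (c : ℂ) • (star U *ᵥ v) := by
      rw [← Matrix.mulVec_mulVec, h1, Matrix.mulVec_smul]
    simpa [hUU', Matrix.one_mulVec] using h2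
  have hkey : Matrix.diagonal (fun i => ((f (hA.eigenvalues i) : ℝ) : ℂ)) *ᵥ (star U *ᵥ v)
      = ((f c : ℝ) : ℂ) • (star U *ᵥ v) := by
    ext k
    have hk := congrFun hdw k
    simp only [Matrix.mulVec_diagonal, Pi.smul_apply, smul_eq_mul] at hk ⊢
    by_cases h0 : (star U *ᵥ v) k = 0
    · simp [h0]
    · have h3 : ((hA.eigenvalues k : ℝ) : ℂ) = (c : ℂ) := mul_right_cancel₀ h0 hk
      have h4 : hA.eigenvalues k = c := by exact_mod_cast h3
      rw [h4]
  rw [specFun, dif_pos hA, ← hU, ← Matrix.mulVec_mulVec, ← Matrix.mulVec_mulVec, hkey,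
    Matrix.mulVec_smul, hvw]

lemma eq_of_mulVec_onb (M N : Matrix (Fin d) (Fin d) ℂ) (x : Fin d → Fin d → ℂ)
    (hx : ∀ i k, star (x i) ⬝ᵥ x k = if i = k then 1 else 0)
    (h : ∀ j, M *ᵥ x j = N *ᵥ x j) : M = N := by
  set P : Matrix (Fin d) (Fin d) ℂ := Matrix.of fun k j => x j k with hPdef
  have hP : star P * P = 1 := by
    ext i j
    have := hx i j
    simpa [Matrix.mul_apply, Matrix.star_apply, Matrix.one_apply, dotProduct, P,
      mul_comm] using this
  have hP' : P * star P = 1 := mul_eq_one_comm.mp hP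
  have hMP : M * P = N * P := by
    ext k j
    have := congrFun (h j) k
    simpa [Matrix.mul_apply, Matrix.mulVec, dotProduct, P] using this
  calc M = M * (P * star P) := by rw [hP', Matrix.mul_one]
    _ = (M * P) * star P := by rw [Matrix.mul_assoc]
    _ = N * (P * star P) := by rw [hMP, Matrix.mul_assoc]
    _ = N := by rw [hP', Matrix.mul_one]

lemma trace_vvmul (u u' v v' : Fin d → ℂ) :
    (Matrix.vecMulVec u u' * Matrix.vecMulVec v v').trace = (u' ⬝ᵥ v) * (v' ⬝ᵥ u) := by
  simp only [Matrix.trace, Matrix.diag_apply, Matrix.mul_apply, Matrix.vecMulVec_apply,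
    dotProduct, Finset.sum_mul, Finset.mul_sum]
  apply Finset.sum_congr rfl
  intros; apply Finset.sum_congr rfl; intros; ring

lemma dot_conj (u v : Fin d → ℂ) :
    star v ⬝ᵥ u = (starRingEnd ℂ) (star u ⬝ᵥ v) := by
  simp only [dotProduct, Pi.star_apply, map_sum, _root_.map_mul, Complex.star_def,
    Complex.conj_conj]
  apply Finset.sum_congr rfl
  intros; ring

end auxLemmas

/-- The Petz Rényi quantity of `(ρ,σ)` equals the classical Rényi quantity of the
Nussbaum–Szkoła distributions: `Tr[ρ^α σ^{1-α}] = Σ_{i,j} p(i,j)^α q(i,j)^{1-α}`. -/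
theorem petz_eq_classical_ns {d : ℕ} (ρ σ : Matrix (Fin d) (Fin d) ℂ)
    (hρ : ρ.PosSemidef) (hσ : σ.PosSemidef) (hρ1 : ρ.trace = 1) (hσ1 : σ.trace = 1)
    (lam gam : Fin d → ℝ) (x y : Fin d → (Fin d → ℂ))
    (hx : ∀ i k, star (x i) ⬝ᵥ x k = if i = k then 1 else 0)
    (hy : ∀ i k, star (y i) ⬝ᵥ y k = if i = k then 1 else 0)
    (hρdec : ρ = ∑ i, (lam i : ℂ) • Matrix.vecMulVec (x i) (star (x i)))
    (hσdec : σ = ∑ j, (gam j : ℂ) • Matrix.vecMulVec (y j) (star (y j)))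
    (α : ℝ) (hα : α ∈ Set.Ioo (0 : ℝ) 1) :
    ((mPow ρ α * mPow σ (1 - α)).trace).re =
      ∑ i, ∑ j, (nsDist lam x y i j) ^ α * (nsDist gam y x j i) ^ (1 - α) := by
  -- eigenvalue nonnegativity
  have hρx : ∀ i, ρ *ᵥ x i = (lam i : ℂ) • x i := fun i => by
    rw [hρdec]; exact decomp_mulVec lam x hx i
  have hσy : ∀ j, σ *ᵥ y j = (gam j : ℂ) • y j := fun j => by
    rw [hσdec]; exact decomp_mulVec gam y hy j
  have hlam : ∀ i, 0 ≤ lam i := by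
    intro i
    have h0 := hρ.dotProduct_mulVec_nonneg (x i)
    rw [hρx i, dotProduct_smul, hx i i] at h0
    simpa using Complex.zero_le_real.mp (by simpa using h0)
  have hgam : ∀ j, 0 ≤ gam j := by
    intro j
    have h0 := hσ.dotProduct_mulVec_nonneg (y j)
    rw [hσy j, dotProduct_smul, hy j j] at h0
    simpa using Complex.zero_le_real.mp (by simpa using h0)
  -- spectral powers via the given decompositions
  have hρα : mPow ρ α = ∑ i, ((lam i ^ α : ℝ) : ℂ) • Matrix.vecMulVec (x i) (star (x i)) := by
    apply eq_of_mulVec_onb _ _ x hx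
    intro j
    rw [mPow, specFun_mulVec hρ.1 (fun t => t ^ α) (lam j) (x j) (hρx j),
      decomp_mulVec (fun i => lam i ^ α) x hx j]
  have hσα : mPow σ (1 - α)
      = ∑ j, ((gam j ^ (1 - α) : ℝ) : ℂ) • Matrix.vecMulVec (y j) (star (y j)) := by
    apply eq_of_mulVec_onb _ _ y hy
    intro j
    rw [mPow, specFun_mulVec hσ.1 (fun t => t ^ (1 - α)) (gam j) (y j) (hσy j),
      decomp_mulVec (fun i => gam i ^ (1 - α)) y hy j]
  -- trace computation
  have htr : (mPow ρ α * mPow σ (1 - α)).trace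
      = ((∑ i, ∑ j, lam i ^ α * gam j ^ (1 - α)
          * Complex.normSq (star (x i) ⬝ᵥ y j) : ℝ) : ℂ) := by
    rw [hρα, hσα, Finset.sum_mul_sum]
    rw [Matrix.trace_sum]
    push_cast
    apply Finset.sum_congr rfl
    intro i _
    rw [Matrix.trace_sum]
    apply Finset.sum_congr rfl
    intro j _
    rw [Matrix.smul_mul, Matrix.mul_smul, Matrix.trace_smul, Matrix.trace_smul,
      trace_vvmul, dot_conj (x i) (y j), Complex.mul_conj]
    simp only [smul_eq_mul]
    ring
  rw [htr, Complex.ofReal_re]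
  -- classical side
  apply Finset.sum_congr rfl
  intro i _
  apply Finset.sum_congr rfl
  intro j _
  have hc : Complex.normSq (star (y j) ⬝ᵥ x i) = Complex.normSq (star (x i) ⬝ᵥ y j) := by
    rw [dot_conj (x i) (y j), Complex.normSq_conj]
  have hcnn : (0 : ℝ) ≤ Complex.normSq (star (x i) ⬝ᵥ y j) := Complex.normSq_nonneg _
  rw [nsDist, nsDist, hc]
  rw [Real.mul_rpow (hlam i) hcnn, Real.mul_rpow (hgam j) hcnn]
  have hpow : Complex.normSq (star (x i) ⬝ᵥ y j) ^ α
      * Complex.normSq (star (x i) ⬝ᵥ y j) ^ (1 - α)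
      = Complex.normSq (star (x i) ⬝ᵥ y j) := by
    rw [← Real.rpow_add' hcnn (by norm_num)]
    norm_num
  calc lam i ^ α * gam j ^ (1 - α) * Complex.normSq (star (x i) ⬝ᵥ y j)
      = lam i ^ α * gam j ^ (1 - α)
        * (Complex.normSq (star (x i) ⬝ᵥ y j) ^ α
          * Complex.normSq (star (x i) ⬝ᵥ y j) ^ (1 - α)) := by rw [hpow]
    _ = lam i ^ α * Complex.normSq (star (x i) ⬝ᵥ y j) ^ α
        * (gam j ^ (1 - α) * Complex.normSq (star (x i) ⬝ᵥ y j) ^ (1 - α)) := by ring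

end
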